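/- Let $V$ be a finite-dimensional Hilbert space, $H = H^*$ self-adjoint on $V$, $\beta > 0$, and $\langle B\rangle := \mathrm{Tr}(Be^{-\beta H})/\mathrm{Tr}(e^{-\beta H})$. Then for every linear operator $C$ on $V$, $\langle [[C, H], C^*]\rangle \ge 0$. -/

import Mathlib

open Matrix

variable {n : ℕ}

/-- Thermal (Gibbs) average of `B` w.r.t. Hamiltonian `H` at inverse temperature `β`. -/
noncomputable def gibbsAvg (H : Matrix (Fin n) (Fin n) ℂ) (β : ℝ)
    (B : Matrix (Fin n) (Fin n) ℂ) : ℂ :=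
  (B * NormedSpace.exp ((-(β : ℂ)) • H)).trace
    / (NormedSpace.exp ((-(β : ℂ)) • H)).trace

/-- Positivity of the double commutator in a Gibbs state: `⟨[[C,H],C*]⟩ ≥ 0`. -/
theorem double_commutator_gibbs_nonneg (hn : 0 < n)
    (H : Matrix (Fin n) (Fin n) ℂ) (hH : H.IsHermitian)
    (β : ℝ) (hβ : 0 < β) (C : Matrix (Fin n) (Fin n) ℂ) :
    0 ≤ (gibbsAvg H β ((C * H - H * C) * Cᴴ - Cᴴ * (C * H - H * C))).re := by
  classical
  set U : Matrix (Fin n) (Fin n) ℂ := (hH.eigenvectorUnitary : Matrix (Fin n) (Fin n) ℂ) with hU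
  have hmem := hH.eigenvectorUnitary.2
  have hsUU : star U * U = 1 := hmem.1
  have hUsU : U * star U = 1 := hmem.2
  have hUinv : U⁻¹ = star U := Matrix.inv_eq_right_inv hUsU
  have hUunit : IsUnit U := ⟨⟨U, star U, hUsU, hsUU⟩, rfl⟩
  set E := hH.eigenvalues with hE
  set D : Matrix (Fin n) (Fin n) ℂ := diagonal (fun i => (E i : ℂ)) with hD
  have hspec : H = U * D * star U := by
    have := hH.spectral_theorem
    exact this
  set g : Fin n → ℝ := fun i => Real.exp (-β * E i) with hg
  set ρ : Matrix (Fin n) (Fin n) ℂ := diagonal (fun i => (g i : ℂ)) with hρ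
  have hexp : NormedSpace.exp ((-(β : ℂ)) • H) = U * ρ * star U := by
    rw [hspec]
    have h1 : (-(β : ℂ)) • (U * D * star U) = U * ((-(β : ℂ)) • D) * U⁻¹ := by
      rw [hUinv]; simp [Matrix.mul_smul, Matrix.smul_mul]
    rw [h1, Matrix.exp_conj U ((-(β : ℂ)) • D) hUunit, hUinv]
    congr 1
    congr 1
    rw [hD, ← Matrix.diagonal_smul, Matrix.exp_diagonal]
    have hfun : NormedSpace.exp ((-(β : ℂ)) • fun i => (E i : ℂ)) = fun i => (g i : ℂ) := by
      funext i
      rw [Pi.coe_exp, Pi.smul_apply, smul_eq_mul, ← Complex.exp_eq_exp_ℂ,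
        show (-(β:ℂ)) * (E i : ℂ) = ((-β * E i : ℝ) : ℂ) by push_cast; ring, ← Complex.ofReal_exp]
    rw [hfun]
  -- conjugation is multiplicative
  have hmul : ∀ X Y : Matrix (Fin n) (Fin n) ℂ,
      (star U * X * U) * (star U * Y * U) = star U * (X * Y) * U := by
    intro X Y
    calc (star U * X * U) * (star U * Y * U)
        = star U * X * ((U * star U) * (Y * U)) := by simp only [Matrix.mul_assoc]
      _ = star U * (X * Y) * U := by rw [hUsU, Matrix.one_mul]; simp only [Matrix.mul_assoc]
  set Cp : Matrix (Fin n) (Fin n) ℂ := star U * C * U with hCp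
  have hHD : star U * H * U = D := by
    rw [hspec]
    calc star U * (U * D * star U) * U
        = (star U * U) * (D * (star U * U)) := by simp only [Matrix.mul_assoc]
      _ = D := by rw [hsUU, Matrix.one_mul, Matrix.mul_one]
  have hCH : star U * Cᴴ * U = Cpᴴ := by
    rw [hCp]
    simp only [Matrix.conjTranspose_mul, Matrix.star_eq_conjTranspose,
      Matrix.conjTranspose_conjTranspose, Matrix.mul_assoc]
  have hconj : star U * ((C * H - H * C) * Cᴴ - Cᴴ * (C * H - H * C)) * U
      = (Cp * D - D * Cp) * Cpᴴ - Cpᴴ * (Cp * D - D * Cp) := by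
    have hsub : ∀ X Y : Matrix (Fin n) (Fin n) ℂ,
        star U * (X - Y) * U = star U * X * U - star U * Y * U := by
      intro X Y; rw [Matrix.mul_sub, Matrix.sub_mul]
    rw [hsub, ← hmul, ← hmul, hsub, ← hmul, ← hmul, hHD, hCH, ← hCp]
  have htr : ∀ X : Matrix (Fin n) (Fin n) ℂ,
      (X * (U * ρ * star U)).trace = ((star U * X * U) * ρ).trace := by
    intro X
    rw [show X * (U * ρ * star U) = (X * (U * ρ)) * star U by simp only [Matrix.mul_assoc],
      Matrix.trace_mul_comm]
    congr 1
    simp only [Matrix.mul_assoc]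
  -- the numerator as a real sum
  set S : ℝ := ∑ i, ∑ j, Complex.normSq (Cp i j) * ((E j - E i) * (g i - g j)) with hS
  have hnum : (((C * H - H * C) * Cᴴ - Cᴴ * (C * H - H * C))
      * NormedSpace.exp ((-(β : ℂ)) • H)).trace = (S : ℂ) := by
    rw [hexp, htr, hconj]
    obtain ⟨K, hKg⟩ : ∃ K, Cp * D - D * Cp = K := ⟨_, rfl⟩
    have hKe : ∀ i j, K i j = ((E j : ℂ) - (E i : ℂ)) * Cp i j := by
      intro i j
      rw [← hKg]
      simp only [Matrix.sub_apply, hD, Matrix.mul_diagonal, Matrix.diagonal_mul]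
      ring
    rw [hKg]
    have h1 : ((K * Cpᴴ - Cpᴴ * K) * ρ).trace
        = ∑ i, ∑ j, ((((E j : ℂ) - (E i : ℂ)) * Cp i j) * star (Cp i j) * (g i : ℂ)
          - star (Cp j i) * ((((E i : ℂ) - (E j : ℂ)) * Cp j i)) * (g i : ℂ)) := by
      rw [Matrix.trace]
      simp only [Matrix.diag_apply, hρ, Matrix.mul_diagonal, Matrix.sub_apply, Matrix.mul_apply,
        Matrix.conjTranspose_apply, hKe, Matrix.diagonal_apply, mul_ite, mul_zero,
        Finset.sum_ite_eq', Finset.mem_univ, if_true]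
      refine Finset.sum_congr rfl fun i _ => ?_
      rw [sub_mul, Finset.sum_mul, Finset.sum_mul, ← Finset.sum_sub_distrib]
    rw [h1]
    simp only [Finset.sum_sub_distrib]
    have hcomm : (∑ i, ∑ j, star (Cp j i) * ((((E i : ℂ) - (E j : ℂ)) * Cp j i)) * (g i : ℂ))
        = ∑ i, ∑ j, star (Cp i j) * ((((E j : ℂ) - (E i : ℂ)) * Cp i j)) * (g j : ℂ) :=
      Finset.sum_comm
    rw [hcomm, ← Finset.sum_sub_distrib]
    rw [hS, Complex.ofReal_sum]
    refine Finset.sum_congr rfl fun i _ => ?_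
    rw [← Finset.sum_sub_distrib, Complex.ofReal_sum]
    refine Finset.sum_congr rfl fun j _ => ?_
    rw [Complex.ofReal_mul, Complex.normSq_eq_conj_mul_self, starRingEnd_apply]
    push_cast
    ring
  -- the denominator as a real sum
  set T : ℝ := ∑ i, g i with hT
  have hden : (NormedSpace.exp ((-(β : ℂ)) • H)).trace = (T : ℂ) := by
    rw [hexp, show U * ρ * star U = U * (ρ * star U) by simp only [Matrix.mul_assoc],
      Matrix.trace_mul_comm, show ρ * star U * U = ρ * (star U * U) by simp only [Matrix.mul_assoc],
      hsUU, Matrix.mul_one, hρ, Matrix.trace_diagonal, hT, Complex.ofReal_sum]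
  have hTpos : 0 < T := by
    rw [hT]
    have : Nonempty (Fin n) := ⟨⟨0, hn⟩⟩
    exact Finset.sum_pos (fun i _ => Real.exp_pos _) Finset.univ_nonempty
  have hSnonneg : 0 ≤ S := by
    rw [hS]
    refine Finset.sum_nonneg fun i _ => Finset.sum_nonneg fun j _ => ?_
    refine mul_nonneg (Complex.normSq_nonneg _) ?_
    rcases le_total (E i) (E j) with h | h
    · refine mul_nonneg (by linarith) ?_
      have := Real.exp_le_exp.2 (show -β * E j ≤ -β * E i by nlinarith)
      simpa [hg] using sub_nonneg.2 this
    · have h1 : E j - E i ≤ 0 := by linarith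
      have h2 : g i - g j ≤ 0 := by
        have := Real.exp_le_exp.2 (show -β * E i ≤ -β * E j by nlinarith)
        simpa [hg] using sub_nonpos.2 this
      nlinarith
  rw [gibbsAvg, hnum, hden, ← Complex.ofReal_div, Complex.ofReal_re]
  exact div_nonneg hSnonneg hTpos.le
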